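/- Let α ∈ (0,1) be irrational and b ∈ (0,1), and let x ∈ [0,1). Then the orbit of the point (0,x) under the Veech skew product T_{2,α,b} on X = (ℤ/2ℤ) × [0,1) is equidistributed if and only if the orbit of the point (0, {b+1−x}) under the Veech skew product T_{2,1−α,b} on X is equidistributed. -/

import Mathlib

open scoped Classical

/-- The Veech skew product `T_{n,α,b}` on `(ℤ/nℤ) × [0,1)`. -/
noncomputable def veechT (n : ℕ) (α b : ℝ) (p : ZMod n × ℝ) : ZMod n × ℝ :=
  if Int.fract (p.2 + α) < b then (p.1 + 1, Int.fract (p.2 + α))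
  else (p.1, Int.fract (p.2 + α))

/-- Equidistribution of the orbit of `x` under `T_{n,α,b}`. -/
def veechEquidistributed (n : ℕ) (α b : ℝ) (x : ZMod n × ℝ) : Prop :=
  ∀ ℓ : ZMod n, ∀ c d : ℝ, 0 ≤ c → c ≤ d → d ≤ 1 →
    Filter.Tendsto
      (fun N : ℕ =>
        (((Finset.range N).filter (fun j =>
            ((veechT n α b)^[j] x).1 = ℓ ∧ ((veechT n α b)^[j] x).2 ∈ Set.Ico c d)).card : ℝ)
          / (N : ℝ))
      Filter.atTop (nhds ((d - c) / (n : ℝ)))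

/-- fract of a shifted fract. -/
lemma fract_fract_add (u v : ℝ) : Int.fract (Int.fract u + v) = Int.fract (u + v) := by
  have h : Int.fract u + v = (u + v) - (⌊u⌋ : ℤ) := by rw [Int.fract]; ring
  rw [h, Int.fract_sub_intCast]

lemma fract_sub_fract (u v : ℝ) : Int.fract (v - Int.fract u) = Int.fract (v - u) := by
  have h : v - Int.fract u = (v - u) + (⌊u⌋ : ℤ) := by rw [Int.fract]; ring
  rw [h, Int.fract_add_intCast]

/-- Shift lemma. -/
lemma fract_shift_mem {c d : ℝ} (hc : 0 ≤ c) (hc1 : c ≤ 1) (hd : d ≤ 1) (w : ℝ) :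
    Int.fract w ∈ Set.Ico c d ↔ Int.fract (w - c) < d - c := by
  have h1 : Int.fract (w - c) = Int.fract (Int.fract w - c) := by
    have h : w - c = (Int.fract w - c) + (⌊w⌋ : ℤ) := by rw [Int.fract]; ring
    rw [h, Int.fract_add_intCast]
  have hw0 := Int.fract_nonneg w
  have hw1 := Int.fract_lt_one w
  rcases le_or_gt c (Int.fract w) with h | h
  · have h2 : Int.fract (Int.fract w - c) = Int.fract w - c :=
      Int.fract_eq_self.mpr ⟨by linarith, by linarith⟩
    rw [h1, h2]
    constructor
    · rintro ⟨_, h3⟩; linarith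
    · intro h3; exact ⟨h, by linarith⟩
  · have h2 : Int.fract (Int.fract w - c) = Int.fract w + 1 - c := by
      conv_lhs => rw [show Int.fract w - c = (Int.fract w + 1 - c) - ((1 : ℤ) : ℝ) by
        push_cast; ring]
      rw [Int.fract_sub_intCast]
      exact Int.fract_eq_self.mpr ⟨by linarith, by linarith⟩
    rw [h1, h2]
    constructor
    · rintro ⟨h3, _⟩; linarith
    · intro h3; exfalso; linarith

lemma gate_flip {b y : ℝ} (hb0 : 0 < b) (hb1 : b < 1) (hy : Int.fract y = y)
    (h0 : y ≠ 0) (hb : y ≠ b) : (Int.fract (b - y) < b ↔ y < b) := by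
  have hy0 : 0 ≤ y := hy ▸ Int.fract_nonneg y
  have hy1 : y < 1 := hy ▸ Int.fract_lt_one y
  rcases lt_or_gt_of_ne hb with h | h
  · have h0' : 0 < y := lt_of_le_of_ne hy0 (Ne.symm h0)
    have : Int.fract (b - y) = b - y := Int.fract_eq_self.mpr ⟨by linarith, by linarith⟩
    rw [this]
    constructor <;> intro <;> linarith
  · have : Int.fract (b - y) = b - y + 1 := by
      conv_lhs => rw [show b - y = (b - y + 1) - ((1 : ℤ) : ℝ) by push_cast; ring]
      rw [Int.fract_sub_intCast]
      exact Int.fract_eq_self.mpr ⟨by linarith, by linarith⟩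
    rw [this]
    constructor <;> intro <;> linarith

lemma orbit_injective {α : ℝ} (hirr : Irrational α) (x t : ℝ) {j j' : ℕ}
    (h : Int.fract (x + j * α - t) = Int.fract (x + j' * α - t)) : j = j' := by
  by_contra hne
  obtain ⟨z, hz⟩ := Int.fract_eq_fract.mp h
  have hji : ((j : ℝ) - j') ≠ 0 := sub_ne_zero.mpr (by exact_mod_cast hne)
  have hq : ((j : ℚ) : ℝ) - ((j' : ℚ) : ℝ) ≠ 0 := by push_cast; exact hji
  refine hirr ⟨(z : ℚ) / ((j : ℚ) - (j' : ℚ)), ?_⟩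
  push_cast
  rw [div_eq_iff (by push_cast at hq ⊢; exact hji)]
  nlinarith [hz]

lemma veechT_snd (n : ℕ) (α b : ℝ) (p : ZMod n × ℝ) :
    (veechT n α b p).2 = Int.fract (p.2 + α) := by
  unfold veechT; split <;> rfl

lemma veechT_iter_snd (n : ℕ) (α b x : ℝ) (ℓ : ZMod n) (hx : Int.fract x = x) (j : ℕ) :
    ((veechT n α b)^[j] (ℓ, x)).2 = Int.fract (x + j * α) := by
  induction j with
  | zero => simpa using hx.symm
  | succ k ih =>
      rw [Function.iterate_succ_apply', veechT_snd, ih, fract_fract_add]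
      congr 1
      push_cast
      ring

lemma veechT_iter_fst (n : ℕ) (α b x : ℝ) (ℓ : ZMod n) (hx : Int.fract x = x) (j : ℕ) :
    ((veechT n α b)^[j] (ℓ, x)).1 = ℓ +
      ((((Finset.range j).filter
        (fun i : ℕ => Int.fract (x + ((i : ℝ) + 1) * α) < b)).card : ℕ) : ZMod n) := by
  induction j with
  | zero => simp
  | succ k ih =>
      have hq : Int.fract (((veechT n α b)^[k] (ℓ, x)).2 + α) = Int.fract (x + (k + 1) * α) := by
        rw [veechT_iter_snd n α b x ℓ hx k, fract_fract_add]
        congr 1; ring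
      rw [Function.iterate_succ_apply']
      set q := (veechT n α b)^[k] (ℓ, x) with hqdef
      rw [show veechT n α b q = if Int.fract (q.2 + α) < b then (q.1 + 1, Int.fract (q.2 + α))
            else (q.1, Int.fract (q.2 + α)) from rfl]
      rw [hq, Finset.range_add_one, Finset.filter_insert]
      split_ifs with hk
      · simp only [Prod.fst]
        rw [Finset.card_insert_of_notMem (by simp), ih]
        push_cast
        ring
      · simpa using ih

lemma count_congr_tendsto (f g : ℕ → Prop) [DecidablePred f] [DecidablePred g]
    (S : Set ℕ) (hS : S.Finite)
    (hfg : ∀ j ∉ S, (f j ↔ g j)) (L : ℝ)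
    (hf : Filter.Tendsto (fun N : ℕ =>
      (((Finset.range N).filter f).card : ℝ) / N) Filter.atTop (nhds L)) :
    Filter.Tendsto (fun N : ℕ =>
      (((Finset.range N).filter g).card : ℝ) / N) Filter.atTop (nhds L) := by
  set C : ℕ := hS.toFinset.card with hC
  have hsub1 : ∀ N : ℕ,
      ((Finset.range N).filter g).card ≤ ((Finset.range N).filter f).card + C := by
    intro N
    have : (Finset.range N).filter g ⊆ ((Finset.range N).filter f) ∪ hS.toFinset := by
      intro j hj
      simp only [Finset.mem_filter, Finset.mem_union, Set.Finite.mem_toFinset] at hj ⊢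
      by_cases hjS : j ∈ S
      · exact Or.inr hjS
      · exact Or.inl ⟨hj.1, (hfg j hjS).mpr hj.2⟩
    calc ((Finset.range N).filter g).card ≤ _ := Finset.card_le_card this
      _ ≤ _ := Finset.card_union_le _ _
  have hsub2 : ∀ N : ℕ,
      ((Finset.range N).filter f).card ≤ ((Finset.range N).filter g).card + C := by
    intro N
    have : (Finset.range N).filter f ⊆ ((Finset.range N).filter g) ∪ hS.toFinset := by
      intro j hj
      simp only [Finset.mem_filter, Finset.mem_union, Set.Finite.mem_toFinset] at hj ⊢
      by_cases hjS : j ∈ S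
      · exact Or.inr hjS
      · exact Or.inl ⟨hj.1, (hfg j hjS).mp hj.2⟩
    calc ((Finset.range N).filter f).card ≤ _ := Finset.card_le_card this
      _ ≤ _ := Finset.card_union_le _ _
  have key : ∀ N : ℕ, |(((Finset.range N).filter g).card : ℝ) -
      (((Finset.range N).filter f).card : ℝ)| ≤ C := by
    intro N
    rw [abs_le]
    constructor
    · have := (Nat.cast_le (α := ℝ)).mpr (hsub2 N)
      push_cast at this ⊢
      linarith
    · have := (Nat.cast_le (α := ℝ)).mpr (hsub1 N)
      push_cast at this ⊢
      linarith
  have h0 : Filter.Tendsto (fun N : ℕ =>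
      ((((Finset.range N).filter g).card : ℝ) - (((Finset.range N).filter f).card : ℝ)) / N)
      Filter.atTop (nhds 0) := by
    apply squeeze_zero_norm (a := fun N : ℕ => (C : ℝ) / N)
    · intro N
      rcases Nat.eq_zero_or_pos N with h | h
      · simp [h]
      · rw [norm_div, Real.norm_natCast]
        gcongr
        exact key N
    · exact tendsto_const_div_atTop_nhds_zero_nat (C : ℝ)
  have := hf.add h0
  rw [add_zero] at this
  apply this.congr
  intro N
  rw [← add_div]
  ring_nf

lemma veechT_iter_snd_fract (n : ℕ) (α b : ℝ) (p : ZMod n × ℝ) (hp : Int.fract p.2 = p.2)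
    (j : ℕ) : Int.fract (((veechT n α b)^[j] p).2) = ((veechT n α b)^[j] p).2 := by
  cases j with
  | zero => exact hp
  | succ k => rw [Function.iterate_succ_apply', veechT_snd]; exact Int.fract_fract _

lemma arc_tendsto {n : ℕ} {α b : ℝ} {p : ZMod n × ℝ} (hp : Int.fract p.2 = p.2)
    (h : veechEquidistributed n α b p) (m : ZMod n) (s β : ℝ)
    (hs0 : 0 ≤ s) (hs1 : s < 1) (hβ0 : 0 ≤ β) (hβ1 : β ≤ 1) :
    Filter.Tendsto (fun N : ℕ => (((Finset.range N).filter (fun j =>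
      ((veechT n α b)^[j] p).1 = m ∧ Int.fract (((veechT n α b)^[j] p).2 - s) < β)).card : ℝ)
      / (N : ℝ)) Filter.atTop (nhds (β / (n : ℝ))) := by
  set A := min (s + β) 1 with hA
  set B := max (s + β - 1) 0 with hB
  have hABβ : (A - s) + (B - 0) = β := by
    rcases le_total (s + β) 1 with h' | h'
    · rw [hA, hB, min_eq_left h', max_eq_right (by linarith)]; ring
    · rw [hA, hB, min_eq_right h', max_eq_left (by linarith)]; ring
  have hBs : B ≤ s := by rw [hB]; exact max_le (by linarith) hs0
  -- pointwise
  have hpt : ∀ y : ℝ, Int.fract y = y →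
      (Int.fract (y - s) < β ↔ (y ∈ Set.Ico s A ∨ y ∈ Set.Ico 0 B)) := by
    intro y hy
    have hy0 : 0 ≤ y := hy ▸ Int.fract_nonneg y
    have hy1 : y < 1 := hy ▸ Int.fract_lt_one y
    rcases le_or_gt s y with hsy | hsy
    · have : Int.fract (y - s) = y - s := Int.fract_eq_self.mpr ⟨by linarith, by linarith⟩
      rw [this]
      constructor
      · intro h'
        exact Or.inl ⟨hsy, lt_min (by linarith) hy1⟩
      · rintro (⟨_, h'⟩ | ⟨_, h'⟩)
        · have := min_le_left (s + β) 1; linarith [h'.trans_le (min_le_left (s + β) 1)]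
        · linarith
    · have : Int.fract (y - s) = y - s + 1 := by
        conv_lhs => rw [show y - s = (y - s + 1) - ((1 : ℤ) : ℝ) by push_cast; ring]
        rw [Int.fract_sub_intCast]
        exact Int.fract_eq_self.mpr ⟨by linarith, by linarith⟩
      rw [this]
      constructor
      · intro h'
        refine Or.inr ⟨hy0, ?_⟩
        rw [hB]
        exact lt_max_of_lt_left (by linarith)
      · rintro (⟨h', _⟩ | ⟨_, h'⟩)
        · linarith
        · rcases le_or_gt (s + β - 1) 0 with h'' | h''
          · rw [hB, max_eq_right h''] at h'; linarith
          · rw [hB, max_eq_left h''.le] at h'; linarith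
  have hsplit : ∀ N : ℕ, ((Finset.range N).filter (fun j =>
      ((veechT n α b)^[j] p).1 = m ∧ Int.fract (((veechT n α b)^[j] p).2 - s) < β)).card
      = ((Finset.range N).filter (fun j =>
          ((veechT n α b)^[j] p).1 = m ∧ ((veechT n α b)^[j] p).2 ∈ Set.Ico s A)).card
      + ((Finset.range N).filter (fun j =>
          ((veechT n α b)^[j] p).1 = m ∧ ((veechT n α b)^[j] p).2 ∈ Set.Ico 0 B)).card := by
    intro N
    have hcongr : (Finset.range N).filter (fun j =>
        ((veechT n α b)^[j] p).1 = m ∧ Int.fract (((veechT n α b)^[j] p).2 - s) < β)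
        = (Finset.range N).filter (fun j =>
          (((veechT n α b)^[j] p).1 = m ∧ ((veechT n α b)^[j] p).2 ∈ Set.Ico s A) ∨
          (((veechT n α b)^[j] p).1 = m ∧ ((veechT n α b)^[j] p).2 ∈ Set.Ico 0 B)) := by
      apply Finset.filter_congr
      intro j _
      rw [hpt _ (veechT_iter_snd_fract n α b p hp j), and_or_left]
    rw [hcongr, Finset.filter_or, Finset.card_union_of_disjoint]
    rw [Finset.disjoint_left]
    intro j hj1 hj2
    simp only [Finset.mem_filter] at hj1 hj2
    obtain ⟨-, -, ⟨hs', -⟩⟩ := hj1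
    obtain ⟨-, -, ⟨-, hB'⟩⟩ := hj2
    linarith
  have h1 := h m s A hs0 (le_min (by linarith) hs1.le) (min_le_right _ _)
  have h2 := h m 0 B le_rfl (le_max_right _ _) (max_le (by linarith) (by linarith))
  have hsum := h1.add h2
  have hval : (A - s) / (n : ℝ) + (B - 0) / (n : ℝ) = β / (n : ℝ) := by
    rw [← add_div, hABβ]
  rw [hval] at hsum
  apply hsum.congr
  intro N
  rw [hsplit N]
  push_cast
  ring

lemma snd_chain {b c d : ℝ} (hc : 0 ≤ c) (hcd : c ≤ d) (hd : d ≤ 1)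
    (y : ℝ)
    (h2 : Int.fract (y - (b - c)) ≠ 0) (h3 : Int.fract (y - (b - c)) ≠ 1 - (d - c)) :
    (Int.fract (b - y) ∈ Set.Ico c d ↔ Int.fract (y - Int.fract (b + 1 - d)) < d - c) := by
  have hstep1 : Int.fract (b - y) ∈ Set.Ico c d ↔ Int.fract ((b - y) - c) < d - c :=
    fract_shift_mem hc (hcd.trans hd) hd _
  have hneg : (b - y) - c = -(y - (b - c)) := by ring
  have hstep2 : Int.fract ((b - y) - c) = 1 - Int.fract (y - (b - c)) := by
    rw [hneg, Int.fract_neg h2]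
  have hu0 := Int.fract_nonneg (y - (b - c))
  have hu1 := Int.fract_lt_one (y - (b - c))
  have hstep3 : Int.fract (y - (b - c)) ∈ Set.Ico (1 - (d - c)) 1 ↔
      Int.fract ((y - (b - c)) - (1 - (d - c))) < 1 - (1 - (d - c)) := by
    have := fract_shift_mem (c := 1 - (d - c)) (d := 1) (by linarith) (by linarith) le_rfl
      (y - (b - c))
    exact this
  have hs : Int.fract (y - Int.fract (b + 1 - d)) = Int.fract ((y - (b - c)) - (1 - (d - c))) := by
    rw [fract_sub_fract]
    congr 1
    ring
  rw [hstep1, hstep2, hs]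
  rw [show (1 : ℝ) - (1 - (d - c)) = d - c by ring] at hstep3
  rw [← hstep3]
  simp only [Set.mem_Ico]
  constructor
  · intro h'
    exact ⟨by linarith, hu1⟩
  · rintro ⟨h', -⟩
    rcases lt_or_eq_of_le h' with h'' | h''
    · linarith
    · exact absurd h''.symm h3

lemma fract_fract_sub (u t : ℝ) : Int.fract (Int.fract u - t) = Int.fract (u - t) := by
  rw [sub_eq_add_neg, fract_fract_add, ← sub_eq_add_neg]

lemma veech_forward (α b x : ℝ) (hirr : Irrational α) (hb0 : 0 < b) (hb1 : b < 1)
    (hx : x ∈ Set.Ico (0 : ℝ) 1)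
    (h : veechEquidistributed 2 α b ((0 : ZMod 2), x)) :
    veechEquidistributed 2 (1 - α) b ((0 : ZMod 2), Int.fract (b + 1 - x)) := by
  set x' := Int.fract (b + 1 - x) with hx'def
  have hxf : Int.fract x = x := Int.fract_eq_self.mpr ⟨hx.1, hx.2⟩
  have hx'f : Int.fract x' = x' := Int.fract_fract _
  -- the key identity on second coordinates
  have hz : ∀ j : ℕ, Int.fract (x' + (j : ℝ) * (1 - α)) =
      Int.fract (b - Int.fract (x + (j : ℝ) * α)) := by
    intro j
    rw [hx'def, fract_fract_add, fract_sub_fract]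
    have e : b + 1 - x + (j : ℝ) * (1 - α) = (b - (x + (j : ℝ) * α)) + ((1 + j : ℤ) : ℝ) := by
      push_cast; ring
    rw [e, Int.fract_add_intCast]
  have hz' : ∀ i : ℕ, Int.fract (x' + ((i : ℝ) + 1) * (1 - α)) =
      Int.fract (b - Int.fract (x + ((i : ℝ) + 1) * α)) := by
    intro i
    have := hz (i + 1)
    push_cast at this
    exact this
  -- the bad set where the two gates disagree
  have hit_once : ∀ v : ℝ, {i : ℕ | Int.fract (x + ((i : ℝ) + 1) * α) = v}.Subsingleton := by
    intro v i hi i' hi'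
    simp only [Set.mem_setOf_eq] at hi hi'
    have : i + 1 = i' + 1 := by
      apply orbit_injective hirr x 0
      have e1 : x + ((i + 1 : ℕ) : ℝ) * α - 0 = x + ((i : ℝ) + 1) * α := by push_cast; ring
      have e2 : x + ((i' + 1 : ℕ) : ℝ) * α - 0 = x + ((i' : ℝ) + 1) * α := by push_cast; ring
      rw [e1, e2, hi, hi']
    omega
  have hBadfin : ({i : ℕ | Int.fract (x + ((i : ℝ) + 1) * α) = 0} ∪
      {i : ℕ | Int.fract (x + ((i : ℝ) + 1) * α) = b}).Finite :=
    ((hit_once 0).finite).union ((hit_once b).finite)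
  obtain ⟨M, hM⟩ := hBadfin.bddAbove
  set J := M + 1 with hJdef
  have hGood : ∀ i : ℕ, J ≤ i → Int.fract (x + ((i : ℝ) + 1) * α) ≠ 0 ∧
      Int.fract (x + ((i : ℝ) + 1) * α) ≠ b := by
    intro i hi
    constructor <;> intro hcon
    · have := hM (Set.mem_union_left _ hcon)
      omega
    · have := hM (Set.mem_union_right _ hcon)
      omega
  -- gate agreement off the bad set
  have hgate : ∀ i : ℕ, J ≤ i →
      ((Int.fract (x' + ((i : ℝ) + 1) * (1 - α)) < b) ↔
        (Int.fract (x + ((i : ℝ) + 1) * α) < b)) := by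
    intro i hi
    rw [hz' i]
    exact gate_flip hb0 hb1 (Int.fract_fract _) (hGood i hi).1 (hGood i hi).2
  -- counting functions
  set Nf : ℕ → ℕ := fun j =>
    (((Finset.range j).filter (fun i : ℕ => Int.fract (x + ((i : ℝ) + 1) * α) < b)).card)
    with hNf
  set Mf : ℕ → ℕ := fun j =>
    (((Finset.range j).filter
      (fun i : ℕ => Int.fract (x' + ((i : ℝ) + 1) * (1 - α)) < b)).card) with hMf
  set δ : ZMod 2 := ((Mf J : ZMod 2) - (Nf J : ZMod 2)) with hδdef
  have hsplitc : ∀ (p : ℕ → Prop) (j : ℕ), J ≤ j →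
      ((Finset.range j).filter p).card =
        ((Finset.range J).filter p).card + ((Finset.Ico J j).filter p).card := by
    intro p j hj
    rw [Finset.range_eq_Ico, ← Finset.Ico_union_Ico_eq_Ico (Nat.zero_le J) hj,
      Finset.filter_union, Finset.card_union_of_disjoint
        (Finset.disjoint_filter_filter (Finset.Ico_disjoint_Ico_consecutive 0 J j)),
      ← Finset.range_eq_Ico]
  have hδ : ∀ j : ℕ, J ≤ j → ((Mf j : ZMod 2) = (Nf j : ZMod 2) + δ) := by
    intro j hj
    have hcc : ((Finset.Ico J j).filter
        (fun i : ℕ => Int.fract (x' + ((i : ℝ) + 1) * (1 - α)) < b)).card =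
        ((Finset.Ico J j).filter (fun i : ℕ => Int.fract (x + ((i : ℝ) + 1) * α) < b)).card := by
      congr 1
      apply Finset.filter_congr
      intro i hi
      exact hgate i (Finset.mem_Ico.mp hi).1
    have e1 : Mf j = Mf J + ((Finset.Ico J j).filter
        (fun i : ℕ => Int.fract (x + ((i : ℝ) + 1) * α) < b)).card := by
      simp only [hMf]
      rw [hsplitc _ j hj, hcc]
    have e2 : Nf j = Nf J + ((Finset.Ico J j).filter
        (fun i : ℕ => Int.fract (x + ((i : ℝ) + 1) * α) < b)).card := by
      simp only [hNf]
      rw [hsplitc _ j hj]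
    rw [e1, e2, hδdef]
    push_cast
    ring
  -- now prove equidistribution for the primed system
  intro ℓ c d hc hcd hd
  set β := d - c with hβdef
  set s := Int.fract (b + 1 - d) with hsdef
  set S : Set ℕ := Set.Iio J ∪ ({j : ℕ | Int.fract (x + (j : ℝ) * α - (b - c)) = 0} ∪
    {j : ℕ | Int.fract (x + (j : ℝ) * α - (b - c)) = 1 - β}) with hSdef
  have hSsub : ∀ v : ℝ, {j : ℕ | Int.fract (x + (j : ℝ) * α - (b - c)) = v}.Subsingleton := by
    intro v j hj j' hj'
    simp only [Set.mem_setOf_eq] at hj hj'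
    exact orbit_injective hirr x (b - c) (hj.trans hj'.symm)
  have hSfin : S.Finite :=
    (Set.finite_Iio J).union (((hSsub 0).finite).union ((hSsub (1 - β)).finite))
  have hpt : ∀ j ∉ S, ((((veechT 2 α b)^[j] ((0 : ZMod 2), x)).1 = ℓ - δ ∧
      Int.fract (((veechT 2 α b)^[j] ((0 : ZMod 2), x)).2 - s) < β) ↔
      (((veechT 2 (1 - α) b)^[j] ((0 : ZMod 2), x')).1 = ℓ ∧
      ((veechT 2 (1 - α) b)^[j] ((0 : ZMod 2), x')).2 ∈ Set.Ico c d)) := by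
    intro j hjS
    rw [hSdef] at hjS
    simp only [Set.mem_union, Set.mem_Iio, Set.mem_setOf_eq, not_or, not_lt] at hjS
    obtain ⟨hjJ, hj2, hj3⟩ := hjS
    have hfst : ((veechT 2 α b)^[j] ((0 : ZMod 2), x)).1 = ((Nf j : ℕ) : ZMod 2) := by
      rw [veechT_iter_fst 2 α b x 0 hxf j, zero_add, hNf]
    have hfst' : ((veechT 2 (1 - α) b)^[j] ((0 : ZMod 2), x')).1 = ((Mf j : ℕ) : ZMod 2) := by
      rw [veechT_iter_fst 2 (1 - α) b x' 0 hx'f j, zero_add, hMf]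
    have hsnd : ((veechT 2 α b)^[j] ((0 : ZMod 2), x)).2 = Int.fract (x + (j : ℝ) * α) :=
      veechT_iter_snd 2 α b x 0 hxf j
    have hsnd' : ((veechT 2 (1 - α) b)^[j] ((0 : ZMod 2), x')).2 =
        Int.fract (b - Int.fract (x + (j : ℝ) * α)) := by
      rw [veechT_iter_snd 2 (1 - α) b x' 0 hx'f j, hz j]
    rw [hfst, hfst', hsnd, hsnd']
    have h2' : Int.fract (Int.fract (x + (j : ℝ) * α) - (b - c)) ≠ 0 := by
      rw [fract_fract_sub]; exact hj2
    have h3' : Int.fract (Int.fract (x + (j : ℝ) * α) - (b - c)) ≠ 1 - (d - c) := by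
      rw [fract_fract_sub]; exact hj3
    have hchain := snd_chain hc hcd hd (Int.fract (x + (j : ℝ) * α)) h2' h3'
    constructor
    · rintro ⟨hf1, hf2⟩
      refine ⟨?_, hchain.mpr hf2⟩
      rw [hδ j hjJ, hf1]
      ring
    · rintro ⟨hg1, hg2⟩
      refine ⟨?_, hchain.mp hg2⟩
      rw [hδ j hjJ] at hg1
      rw [← hg1]
      ring
  have hF := arc_tendsto (p := ((0 : ZMod 2), x)) (by simpa using hxf) h (ℓ - δ) s β
    (Int.fract_nonneg _) (Int.fract_lt_one _) (by rw [hβdef]; linarith) (by rw [hβdef]; linarith)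
  exact count_congr_tendsto _ _ S hSfin hpt _ hF

/-- Lemma 1.1. For irrational `α ∈ (0,1)`, gate size `b ∈ (0,1)`
and starting height `x ∈ [0,1)`, the orbit of `(0,x)` under `T_{2,α,b}` is
equidistributed if and only if the orbit of `(0,{b+1−x})` under `T_{2,1−α,b}` is
equidistributed. -/
theorem equidistribution_slope_reflection (α b x : ℝ) (hirr : Irrational α)
    (h0 : 0 < α) (h1 : α < 1) (hb0 : 0 < b) (hb1 : b < 1)
    (hx : x ∈ Set.Ico (0 : ℝ) 1) :
    veechEquidistributed 2 α b ((0 : ZMod 2), x) ↔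
      veechEquidistributed 2 (1 - α) b ((0 : ZMod 2), Int.fract (b + 1 - x)) := by
  have hirr1 : Irrational (1 - α) := by simpa using hirr.intCast_sub 1
  constructor
  · exact veech_forward α b x hirr hb0 hb1 hx
  · intro h'
    have h2 := veech_forward (1 - α) b (Int.fract (b + 1 - x)) hirr1 hb0 hb1
      ⟨Int.fract_nonneg _, Int.fract_lt_one _⟩ h'
    have e1 : (1 : ℝ) - (1 - α) = α := by ring
    have e2 : Int.fract (b + 1 - Int.fract (b + 1 - x)) = x := by
      rw [fract_sub_fract]
      rw [show b + 1 - (b + 1 - x) = x by ring]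
      exact Int.fract_eq_self.mpr ⟨hx.1, hx.2⟩
    rw [e1, e2] at h2
    exact h2
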